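/- For all positive integers s, k, m, n, ψ_s(m,n) ≤ k·(N^s_k(m) + n) (an inequality in the extended naturals, trivially true if N^s_k(m) is infinite). -/

import Mathlib

/-- The alternating list `a b a b ...` of length `l`. -/
def altList (a b : ℕ) : ℕ → List ℕ
  | 0 => []
  | l + 1 => a :: altList b a l

/-- `S` contains an alternation of length `l`: two distinct symbols occur as an
alternating (not necessarily contiguous) subsequence of length `l`. -/
def HasAlt (S : List ℕ) (l : ℕ) : Prop :=
  ∃ a b : ℕ, a ≠ b ∧ (altList a b l).Sublist S

/-- A Davenport–Schinzel sequence of order `s`: no two adjacent equal entries and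
no alternation of length `s + 2`. -/
def IsDS (s : ℕ) (S : List ℕ) : Prop :=
  List.Chain' (· ≠ ·) S ∧ ¬ HasAlt S (s + 2)

/-- `S` can be partitioned into at most `m` contiguous blocks, each consisting of
pairwise distinct symbols. -/
def HasBlocks (S : List ℕ) (m : ℕ) : Prop :=
  ∃ Bs : List (List ℕ), Bs.length ≤ m ∧ S = Bs.flatten ∧ ∀ B ∈ Bs, B.Nodup

/-- `λ_s(n)`: maximum length of a Davenport–Schinzel sequence of order `s`
using at most `n` distinct symbols. -/
noncomputable def lambdaDS (s n : ℕ) : ℕ :=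
  sSup {L | ∃ S : List ℕ, IsDS s S ∧ S.toFinset.card ≤ n ∧ S.length = L}

/-- `ψ_s(m,n)`: maximum length of a Davenport–Schinzel sequence of order `s` on at
most `n` distinct symbols partitionable into at most `m` blocks of distinct symbols. -/
noncomputable def psiDS (s m n : ℕ) : ℕ :=
  sSup {L | ∃ S : List ℕ, IsDS s S ∧ S.toFinset.card ≤ n ∧ HasBlocks S m ∧ S.length = L}

/-- The Ackermann hierarchy: `A_1(n) = 2n`, and `A_k(n) = A_{k-1}^{(n)}(1)` for `k ≥ 2`. -/
def Ak : ℕ → ℕ → ℕ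
  | 0, n => n + 1
  | 1, n => 2 * n
  | k + 2, n => (Ak (k + 1))^[n] 1

/-- The Ackermann function `A(n) = A_n(3)`. -/
def AckF (n : ℕ) : ℕ := Ak n 3

/-- `α_k(x) = min {n | A_k(n) ≥ x}`. -/
noncomputable def invAk (k x : ℕ) : ℕ := sInf {n | x ≤ Ak k n}

/-- `α(x) = min {n | A(n) ≥ x}`. -/
noncomputable def invA (x : ℕ) : ℕ := sInf {n | x ≤ AckF n}

/-- An `ADS^s_k(m)`-sequence: at most `m` blocks of distinct symbols, every occurring
symbol appears at least `k` times, and no alternation of length `s + 2`. -/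
def IsADS (s k m : ℕ) (S : List ℕ) : Prop :=
  HasBlocks S m ∧ (∀ a ∈ S, k ≤ S.count a) ∧ ¬ HasAlt S (s + 2)

/-- `N^s_k(m)`: the supremum (possibly infinite) of the number of distinct symbols
in an `ADS^s_k(m)`-sequence. -/
noncomputable def NADS (s k m : ℕ) : ℕ∞ :=
  sSup {c : ℕ∞ | ∃ S : List ℕ, IsADS s k m S ∧ c = (S.toFinset.card : ℕ∞)}

/-- `S` is `r`-sparse: any at most `r` consecutive entries are pairwise distinct. -/
def Sparse (r : ℕ) (S : List ℕ) : Prop :=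
  ∀ l : List ℕ, l <:+: S → l.length ≤ r → l.Nodup

/-- `S` contains the pattern `u`: some subsequence of `S` is an injectively renamed
copy of `u`. -/
def ContainsPat (S u : List ℕ) : Prop :=
  ∃ f : ℕ → ℕ, Set.InjOn f {a | a ∈ u} ∧ (u.map f).Sublist S

/-- `Ex_u(n)`: maximum length of an `r`-sparse `u`-free sequence on at most `n`
distinct symbols, where `r` is the number of distinct symbols of `u`. -/
noncomputable def ExDS (u : List ℕ) (n : ℕ) : ℕ :=
  sSup {L | ∃ S : List ℕ, Sparse u.toFinset.card S ∧ ¬ ContainsPat S u ∧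
    S.toFinset.card ≤ n ∧ S.length = L}

/-- An `(r,s)`-formation: a concatenation of `s` permutations of a single set of
`r` distinct symbols. -/
def IsFormation (r s : ℕ) (F : List ℕ) : Prop :=
  ∃ A : Finset ℕ, A.card = r ∧ ∃ Bs : List (List ℕ), Bs.length = s ∧
    (∀ B ∈ Bs, B.Nodup ∧ B.toFinset = A) ∧ F = Bs.flatten

/-- An `(r,s)`-formation-free sequence: `r`-sparse and containing no
`(r,s)`-formation as a subsequence. -/
def FormationFree (r s : ℕ) (S : List ℕ) : Prop :=
  Sparse r S ∧ ¬ ∃ F : List ℕ, IsFormation r s F ∧ F.Sublist S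

/-- `F_{r,s}(n)`: maximum length of an `(r,s)`-formation-free sequence on at most
`n` distinct symbols. -/
noncomputable def FDS (r s n : ℕ) : ℕ :=
  sSup {L | ∃ S : List ℕ, FormationFree r s S ∧ S.toFinset.card ≤ n ∧ S.length = L}



/-- Chunk renaming: each entry `a` is renamed to `pair a (o/k)` where `o` is the
number of previous occurrences of `a` (counted in accumulator `P`). -/
def cren (k : ℕ) : List ℕ → List ℕ → List ℕ
  | _, [] => []
  | P, a :: t => Nat.pair a (P.count a / k) :: cren k (P ++ [a]) t

lemma cren_append (k : ℕ) (P l1 l2 : List ℕ) :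
    cren k P (l1 ++ l2) = cren k P l1 ++ cren k (P ++ l1) l2 := by
  induction l1 generalizing P with
  | nil => simp [cren]
  | cons a t ih => simp [cren, ih (P ++ [a]), List.append_assoc]

lemma cren_map_fst (k : ℕ) (P S : List ℕ) :
    (cren k P S).map (fun x => x.unpair.1) = S := by
  induction S generalizing P with
  | nil => simp [cren]
  | cons a t ih => simp [cren, ih]

lemma cren_filter (k : ℕ) (P S : List ℕ) (a : ℕ) :
    (cren k P S).filter (fun x => x.unpair.1 == a) =
      (List.range' (P.count a) (S.count a)).map (fun o => Nat.pair a (o / k)) := by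
  induction S generalizing P with
  | nil => simp [cren]
  | cons b t ih =>
    by_cases hba : b = a
    · subst hba
      simp only [cren, List.filter_cons, Nat.unpair_pair, beq_self_eq_true, if_pos rfl]
      rw [ih]
      have hc : (P ++ [b]).count b = P.count b + 1 := by simp
      rw [hc]
      have : t.count b + 1 = (b :: t).count b := by simp [List.count_cons]
      rw [← this]
      simp [List.range'_succ]
    · have h1 : (b == a) = false := by simp [hba]
      simp only [cren, List.filter_cons, Nat.unpair_pair, h1, Bool.false_eq_true, if_false]
      rw [ih]
      have hc : (P ++ [b]).count a = P.count a := by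
        simp [List.count_singleton', h1, hba]
      rw [hc]
      have : (b :: t).count a = t.count a := by simp [List.count_cons, h1]
      rw [this]

lemma cren_nodup (k : ℕ) (P : List ℕ) {B : List ℕ} (h : B.Nodup) :
    (cren k P B).Nodup := by
  apply List.Nodup.of_map (fun x => x.unpair.1)
  rw [cren_map_fst]; exact h

lemma cren_blocks (k : ℕ) (P : List ℕ) (Bs : List (List ℕ)) (h : ∀ B ∈ Bs, B.Nodup) :
    ∃ Bs' : List (List ℕ), Bs'.length = Bs.length ∧
      cren k P Bs.flatten = Bs'.flatten ∧ ∀ B ∈ Bs', B.Nodup := by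
  induction Bs generalizing P with
  | nil => exact ⟨[], by simp [cren]⟩
  | cons B Bs ih =>
    obtain ⟨Bs', h1, h2, h3⟩ := ih (P ++ B) (fun C hC => h C (by simp [hC]))
    refine ⟨cren k P B :: Bs', by simp [h1], ?_, ?_⟩
    · rw [List.flatten_cons, cren_append, h2, List.flatten_cons]
    · exact List.forall_mem_cons.mpr ⟨cren_nodup k P (h B (by simp)), h3⟩

lemma altList_map (f : ℕ → ℕ) (a b l : ℕ) :
    (altList a b l).map f = altList (f a) (f b) l := by
  induction l generalizing a b with
  | zero => rfl
  | succ l ih => simp [altList, ih]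

lemma altList_prefix (a b l : ℕ) : (altList a b l).Sublist (altList a b (l + 1)) := by
  induction l generalizing a b with
  | zero => simp [altList]
  | succ l ih => simpa [altList] using ih b a

lemma altList_sublist_of_le (a b : ℕ) {l l' : ℕ} (h : l ≤ l') :
    (altList a b l).Sublist (altList a b l') := by
  induction l' with
  | zero => simpa [Nat.le_zero.mp h]
  | succ l' ih =>
    rcases Nat.lt_or_ge l (l' + 1) with h' | h'
    · exact (ih (Nat.lt_succ_iff.mp h')).trans (altList_prefix a b l')
    · have : l = l' + 1 := le_antisymm h h'
      simp [this]

lemma mem_altList {c a b l : ℕ} (h : c ∈ altList a b l) : c = a ∨ c = b := by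
  induction l generalizing a b with
  | zero => simp [altList] at h
  | succ l ih =>
    simp only [altList, List.mem_cons] at h
    rcases h with rfl | h
    · exact Or.inl rfl
    · exact (ih h).symm.imp id id

lemma countP_div_range {k : ℕ} (hk : 0 < k) (c j : ℕ) (h : (j + 1) * k ≤ c) :
    (List.range c).countP (fun o => o / k == j) = k := by
  have hA : (j + 1) * k = j * k + k := by ring
  rw [hA] at h
  have e1 : c = (c - (j * k + k)) + k + (j * k) := by omega
  have e2 : List.range' (j * k) (c - (j * k + k) + k) =
      List.range' (j * k) k ++ List.range' (j * k + k) (c - (j * k + k)) := by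
    have := List.range'_append (s := j * k) (m := k) (n := c - (j * k + k)) (step := 1)
    rw [show c - (j * k + k) + k = k + (c - (j * k + k)) by omega]
    simpa using this.symm
  rw [List.range_eq_range']
  have e3 : List.range' 0 c =
      List.range' 0 (j * k) ++ List.range' (j * k) (c - (j * k + k) + k) := by
    have := List.range'_append (s := 0) (m := j * k) (n := c - (j * k + k) + k) (step := 1)
    simp only [one_mul, Nat.zero_add] at this
    rw [this]; congr 1; omega
  rw [e3, e2, List.countP_append, List.countP_append]
  have c1 : (List.range' 0 (j * k)).countP (fun o => o / k == j) = 0 := by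
    rw [List.countP_eq_zero]
    intro o ho
    have : o < j * k := by simpa using (List.mem_range'_1.mp ho).2
    have : o / k < j := (Nat.div_lt_iff_lt_mul hk).mpr this
    simp; omega
  have c2 : (List.range' (j * k) k).countP (fun o => o / k == j) = k := by
    have : (List.range' (j * k) k).countP (fun o => o / k == j) =
        (List.range' (j * k) k).length := by
      rw [List.countP_eq_length]
      intro o ho
      obtain ⟨h1, h2⟩ := List.mem_range'_1.mp ho
      have hle : j ≤ o / k := (Nat.le_div_iff_mul_le hk).mpr h1
      have hlt : o / k < j + 1 := (Nat.div_lt_iff_lt_mul hk).mpr (by omega)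
      simp; omega
    simpa using this
  have c3 : (List.range' (j * k + k) (c - (j * k + k))).countP (fun o => o / k == j) = 0 := by
    rw [List.countP_eq_zero]
    intro o ho
    have h1 : j * k + k ≤ o := (List.mem_range'_1.mp ho).1
    have : j + 1 ≤ o / k := (Nat.le_div_iff_mul_le hk).mpr (by omega)
    simp; omega
  omega

lemma count_cren_keep {k : ℕ} (hk : 0 < k) (S : List ℕ) (a j : ℕ)
    (hj : j < S.count a / k) :
    ((cren k [] S).filter
        (fun x => decide (x.unpair.2 < S.count x.unpair.1 / k))).count (Nat.pair a j) = k := by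
  rw [List.count_filter (by simp [Nat.unpair_pair, hj])]
  rw [(List.count_filter (p := fun x => x.unpair.1 == a)
    (by simp [Nat.unpair_pair]) (l := cren k [] S)).symm]
  rw [cren_filter]
  simp only [List.count_nil, ← List.range_eq_range']
  rw [List.count_eq_countP, List.countP_map]
  have hcong : ∀ o ∈ List.range (S.count a),
      (((fun x => x == Nat.pair a j) ∘ fun o => Nat.pair a (o / k)) o = true ↔
        (fun o => o / k == j) o = true) := by
    intro o _
    simp [Nat.pair_eq_pair]
  rw [List.countP_congr hcong]
  exact countP_div_range hk _ j ((Nat.le_div_iff_mul_le hk).mp hj)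

lemma pairwise_snd_cren_filter (k a s c : ℕ) :
    ((List.range' s c).map (fun o => Nat.pair a (o / k))).Pairwise
      (fun u v => u.unpair.2 ≤ v.unpair.2) := by
  refine List.Pairwise.map _ ?_ (List.pairwise_lt_range' (s := s) (n := c))
  intro u v huv
  simp only [Nat.unpair_pair]
  exact Nat.div_le_div_right huv.le

lemma main_bound {s k m n : ℕ} (hk : 0 < k) (S : List ℕ) (hDS : IsDS s S)
    (hs : 1 ≤ s) (hcard : S.toFinset.card ≤ n) (hblocks : HasBlocks S m)
    (N : ℕ) (hN : ∀ T : List ℕ, IsADS s k m T → T.toFinset.card ≤ N) :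
    S.length ≤ k * (N + n) := by
  classical
  set keep : ℕ → Bool := fun x => decide (x.unpair.2 < S.count x.unpair.1 / k) with hkeep
  set T : List ℕ := (cren k [] S).filter keep with hT
  -- blocks
  have hTblocks : HasBlocks T m := by
    obtain ⟨Bs, hBl, hBf, hBn⟩ := hblocks
    obtain ⟨Bs', hl', hf', hn'⟩ := cren_blocks k [] Bs hBn
    refine ⟨Bs'.map (List.filter keep), by simpa [hl'], ?_, ?_⟩
    · rw [hT, hBf, hf', List.filter_flatten]
    · intro B hB
      obtain ⟨C, hC, rfl⟩ := List.mem_map.mp hB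
      exact (hn' C hC).filter keep
  -- counts
  have hcount : ∀ x ∈ T, T.count x = k := by
    intro x hx
    have hxT0 : x ∈ cren k [] S := List.mem_of_mem_filter hx
    have hkx : keep x = true := List.of_mem_filter hx
    have hxf : x ∈ (cren k [] S).filter (fun y => y.unpair.1 == x.unpair.1) :=
      List.mem_filter.mpr ⟨hxT0, by simp⟩
    rw [cren_filter] at hxf
    obtain ⟨o, _, hox⟩ := List.mem_map.mp hxf
    have hj : o / k < S.count x.unpair.1 / k := by
      have := of_decide_eq_true hkx
      rw [← hox] at this
      simpa using this
    have := count_cren_keep hk S x.unpair.1 (o / k) hj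
    rw [hox] at this
    exact this
  have hcount' : ∀ x ∈ T, k ≤ T.count x := fun x hx => (hcount x hx).ge
  -- no alternation
  have hTalt : ¬ HasAlt T (s + 2) := by
    rintro ⟨x, y, hxy, hsub⟩
    have hsubT0 : (altList x y (s + 2)).Sublist (cren k [] S) :=
      hsub.trans List.filter_sublist
    by_cases hab : x.unpair.1 = y.unpair.1
    · have h3 : (altList x y 3).Sublist (altList x y (s + 2)) :=
        altList_sublist_of_le x y (by omega)
      have hxyx : ([x, y, x] : List ℕ).Sublist (cren k [] S) := by
        have := h3.trans hsubT0
        simpa [altList] using this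
      have hff : ([x, y, x].filter (fun z => z.unpair.1 == x.unpair.1)) = [x, y, x] := by
        simp [hab]
      have hsf : ([x, y, x] : List ℕ).Sublist
          ((cren k [] S).filter (fun z => z.unpair.1 == x.unpair.1)) := by
        rw [← hff]; exact hxyx.filter _
      rw [cren_filter] at hsf
      have hpw := (pairwise_snd_cren_filter k x.unpair.1
        (List.count x.unpair.1 []) (S.count x.unpair.1)).sublist hsf
      simp only [List.pairwise_cons, List.mem_cons, List.mem_singleton,
        List.not_mem_nil] at hpw
      have h1 : x.unpair.2 ≤ y.unpair.2 := hpw.1 y (Or.inl rfl)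
      have h2 : y.unpair.2 ≤ x.unpair.2 := hpw.2.1 x (Or.inl rfl)
      apply hxy
      have hx2 : x = Nat.pair x.unpair.1 x.unpair.2 := (Nat.pair_unpair x).symm
      have hy2 : y = Nat.pair y.unpair.1 y.unpair.2 := (Nat.pair_unpair y).symm
      rw [hx2, hy2, ← hab]
      congr 1
      omega
    · apply hDS.2
      have := hsubT0.map (fun z => z.unpair.1)
      rw [altList_map, cren_map_fst] at this
      exact ⟨x.unpair.1, y.unpair.1, hab, this⟩
  have hADS : IsADS s k m T := ⟨hTblocks, hcount', hTalt⟩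
  have hcT : T.toFinset.card ≤ N := hN T hADS
  -- the biUnion of chunk names
  set B : Finset ℕ :=
    S.toFinset.biUnion (fun a => (Finset.range (S.count a / k)).image (Nat.pair a)) with hB
  have hBsub : B ⊆ T.toFinset := by
    intro x hx
    simp only [hB, Finset.mem_biUnion, Finset.mem_image, Finset.mem_range] at hx
    obtain ⟨a, _, j, hj, rfl⟩ := hx
    have hck := count_cren_keep hk S a j hj
    rw [← hkeep, ← hT] at hck
    rw [List.mem_toFinset, ← List.count_pos_iff]
    omega
  have hBcard : B.card = ∑ a ∈ S.toFinset, S.count a / k := by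
    rw [hB, Finset.card_biUnion]
    · refine Finset.sum_congr rfl fun a _ => ?_
      have hinj : Function.Injective (Nat.pair a) := fun u v h => (Nat.pair_eq_pair.mp h).2
      rw [Finset.card_image_of_injective _ hinj, Finset.card_range]
    · intro a _ b _ hab
      simp only [Finset.disjoint_left, Finset.mem_image, Finset.mem_range]
      rintro x ⟨u, _, rfl⟩ ⟨v, _, hv⟩
      exact hab ((Nat.pair_eq_pair.mp hv.symm).1)
  have hsum : ∑ a ∈ S.toFinset, S.count a / k ≤ N := by
    calc ∑ a ∈ S.toFinset, S.count a / k = B.card := hBcard.symm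
      _ ≤ T.toFinset.card := Finset.card_le_card hBsub
      _ ≤ N := hcT
  have hlen : S.length = ∑ a ∈ S.toFinset, S.count a := by
    have := Multiset.toFinset_sum_count_eq (↑S : Multiset ℕ)
    simpa using this.symm
  calc S.length = ∑ a ∈ S.toFinset, S.count a := hlen
    _ ≤ ∑ a ∈ S.toFinset, (k * (S.count a / k) + k) := by
        refine Finset.sum_le_sum fun a _ => ?_
        have h1 := Nat.div_add_mod (S.count a) k
        have h2 := Nat.mod_lt (S.count a) hk
        omega
    _ = k * (∑ a ∈ S.toFinset, S.count a / k) + k * S.toFinset.card := by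
        rw [Finset.sum_add_distrib, Finset.mul_sum, Finset.sum_const, smul_eq_mul, mul_comm]
    _ ≤ k * N + k * n := by
        have := Nat.mul_le_mul_left k hsum
        have := Nat.mul_le_mul_left k hcard
        omega
    _ = k * (N + n) := by ring

/-- For all positive `s, k, m, n`, `ψ_s(m,n) ≤ k·(N^s_k(m) + n)` in the extended naturals. -/
theorem psi_le_NADS :
    ∀ s k m n : ℕ, 1 ≤ s → 1 ≤ k → 1 ≤ m → 1 ≤ n →
      (psiDS s m n : ℕ∞) ≤ (k : ℕ∞) * (NADS s k m + (n : ℕ∞)) := by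
  intro s k m n hs hk hm hn
  rcases eq_or_ne (NADS s k m) ⊤ with hN | hN
  · rw [hN, top_add, ENat.mul_top (by exact_mod_cast (by omega : k ≠ 0))]
    exact le_top
  · obtain ⟨N, hNe⟩ := WithTop.ne_top_iff_exists.mp hN
    have hforall : ∀ T : List ℕ, IsADS s k m T → T.toFinset.card ≤ N := by
      intro T hT
      have h1 : ((T.toFinset.card : ℕ∞)) ≤ NADS s k m := le_sSup ⟨T, hT, rfl⟩
      rw [← hNe] at h1
      exact Nat.cast_le.mp h1
    have key : psiDS s m n ≤ k * (N + n) := by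
      apply csSup_le'
      rintro L ⟨S, hDS, hcard, hblocks, rfl⟩
      exact main_bound (by omega) S hDS hs hcard hblocks N hforall
    calc (psiDS s m n : ℕ∞) ≤ ((k * (N + n) : ℕ) : ℕ∞) := by exact_mod_cast key
      _ = (k : ℕ∞) * ((N : ℕ∞) + n) := by push_cast; ring
      _ = (k : ℕ∞) * (NADS s k m + n) := by rw [← hNe]; rfl
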